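/- Let T be a measure-preserving ergodic transformation of a probability space (X, μ) and φ : X → ℝ an integrable function with ∫ φ dμ = 0. Then for μ-almost every x and every ε > 0, there exist infinitely many n ≥ 1 with |S_nφ(x)| < ε, where S_nφ(x) = ∑_{k=0}^{n−1} φ(Tᵏ x). -/

import Mathlib

open MeasureTheory Filter Finset Function

section Helpers

variable {X : Type*} [MeasurableSpace X] {μ : Measure X} {T : X → X}

lemma mp_integral_comp (hT : MeasurePreserving T μ μ) {g : X → ℝ}
    (hg : AEStronglyMeasurable g μ) : ∫ x, g (T x) ∂μ = ∫ x, g x ∂μ := by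
  rw [← integral_map hT.measurable.aemeasurable (by rwa [hT.map_eq]), hT.map_eq]

lemma mp_integrable_comp (hT : MeasurePreserving T μ μ) {g : X → ℝ}
    (hg : Integrable g μ) : Integrable (fun x => g (T x)) μ := by
  have h1 : AEStronglyMeasurable g (Measure.map T μ) := hT.map_eq.symm ▸ hg.aestronglyMeasurable
  have h2 : Integrable g (Measure.map T μ) := hT.map_eq.symm ▸ hg
  exact (integrable_map_measure h1 hT.measurable.aemeasurable).1 h2

lemma measurable_birkhoffSum (hT : Measurable T) {ψ : X → ℝ} (hm : Measurable ψ) (n : ℕ) :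
    Measurable (fun x => birkhoffSum T ψ n x) := by
  unfold birkhoffSum
  exact Finset.measurable_sum _ fun k _ => hm.comp (hT.iterate k)

lemma integrable_birkhoffSum (hT : MeasurePreserving T μ μ) {ψ : X → ℝ}
    (hi : Integrable ψ μ) (n : ℕ) : Integrable (fun x => birkhoffSum T ψ n x) μ := by
  unfold birkhoffSum
  exact integrable_finset_sum _ fun k _ => mp_integrable_comp (hT.iterate k) hi

set_option linter.unusedSectionVars false

/-- Garsia's tower function. -/
noncomputable def phiMax (T : X → X) (ψ : X → ℝ) : ℕ → X → ℝ
  | 0 => fun _ => 0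
  | (n+1) => fun x => max 0 (ψ x + phiMax T ψ n (T x))

lemma phiMax_succ (T : X → X) (ψ : X → ℝ) (n : ℕ) (x : X) :
    phiMax T ψ (n+1) x = max 0 (ψ x + phiMax T ψ n (T x)) := rfl

lemma phiMax_nonneg (T : X → X) (ψ : X → ℝ) (n : ℕ) (x : X) : 0 ≤ phiMax T ψ n x := by
  cases n with
  | zero => simp [phiMax]
  | succ n => simp [phiMax]

lemma phiMax_mono (T : X → X) (ψ : X → ℝ) (n : ℕ) (x : X) :
    phiMax T ψ n x ≤ phiMax T ψ (n+1) x := by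
  induction n generalizing x with
  | zero => exact phiMax_nonneg T ψ 1 x
  | succ n ih =>
    rw [phiMax_succ, phiMax_succ]
    exact max_le_max le_rfl (by linarith [ih (T x)])

lemma phiMax_mono' (T : X → X) (ψ : X → ℝ) {m n : ℕ} (h : m ≤ n) (x : X) :
    phiMax T ψ m x ≤ phiMax T ψ n x := by
  induction n with
  | zero => simp_all
  | succ n ih =>
    rcases Nat.lt_or_ge m (n+1) with h' | h'
    · exact (ih (Nat.lt_succ_iff.1 h')).trans (phiMax_mono T ψ n x)
    · have : m = n + 1 := le_antisymm h h'
      simp [this]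

lemma measurable_phiMax (hT : Measurable T) {ψ : X → ℝ} (hm : Measurable ψ) (n : ℕ) :
    Measurable (phiMax T ψ n) := by
  induction n with
  | zero => simpa [phiMax] using measurable_const
  | succ n ih => exact measurable_const.max (hm.add (ih.comp hT))

lemma integrable_phiMax (hT : MeasurePreserving T μ μ) {ψ : X → ℝ} (hm : Measurable ψ)
    (hi : Integrable ψ μ) (n : ℕ) : Integrable (phiMax T ψ n) μ := by
  induction n with
  | zero => simpa [phiMax] using integrable_zero X ℝ μ
  | succ n ih =>
    have h : Integrable (fun x => ψ x + phiMax T ψ n (T x)) μ :=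
      hi.add (mp_integrable_comp hT ih)
    have := (integrable_zero X ℝ μ).sup h
    convert this using 1
    funext x
    simp [phiMax_succ, Pi.sup_apply]

lemma birkhoffSum_le_phiMax (T : X → X) (ψ : X → ℝ) {k n : ℕ} (h : k ≤ n) (x : X) :
    birkhoffSum T ψ k x ≤ phiMax T ψ n x := by
  induction n generalizing k x with
  | zero =>
    interval_cases k
    simp [phiMax, birkhoffSum]
  | succ n ih =>
    cases k with
    | zero => simpa [birkhoffSum] using phiMax_nonneg T ψ (n+1) x
    | succ k =>
      rw [birkhoffSum_succ']
      have := ih (Nat.succ_le_succ_iff.1 h) (T x)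
      simp only [phiMax]
      exact le_max_of_le_right (by linarith)

lemma exists_of_phiMax_pos (T : X → X) (ψ : X → ℝ) {n : ℕ} {x : X}
    (h : 0 < phiMax T ψ n x) :
    ∃ k, 1 ≤ k ∧ k ≤ n ∧ phiMax T ψ n x ≤ birkhoffSum T ψ k x := by
  induction n generalizing x with
  | zero => simp [phiMax] at h
  | succ n ih =>
    have hx : phiMax T ψ (n+1) x = ψ x + phiMax T ψ n (T x) := by
      rw [phiMax_succ] at h ⊢
      rcases max_cases (0:ℝ) (ψ x + phiMax T ψ n (T x)) with ⟨h1, h2⟩ | ⟨h1, h2⟩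
      · exact absurd (h1 ▸ h) (lt_irrefl 0)
      · exact h1
    rcases lt_or_eq_of_le (phiMax_nonneg T ψ n (T x)) with hpos | heq
    · obtain ⟨k, hk1, hkn, hk⟩ := ih hpos
      refine ⟨k+1, by omega, Nat.succ_le_succ hkn, ?_⟩
      rw [birkhoffSum_succ']
      linarith [hx]
    · refine ⟨1, le_rfl, by omega, ?_⟩
      rw [birkhoffSum_one]
      rw [hx, ← heq]
      linarith

end Helpers

section Maximal

variable {X : Type*} [MeasurableSpace X] {μ : Measure X} {T : X → X}
set_option linter.unusedSectionVars false

lemma maximal_ergodic (hT : MeasurePreserving T μ μ) {ψ : X → ℝ}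
    (hm : Measurable ψ) (hi : Integrable ψ μ) :
    0 ≤ ∫ x in {x | ∃ n, 1 ≤ n ∧ 0 < birkhoffSum T ψ n x}, ψ x ∂μ := by
  set M : ℕ → Set X := fun n => {x | 0 < phiMax T ψ n x} with hM
  have hMmeas : ∀ n, MeasurableSet (M n) :=
    fun n => measurableSet_lt measurable_const (measurable_phiMax hT.measurable hm n)
  have hMmono : Monotone M := by
    intro a b hab x hx
    exact lt_of_lt_of_le hx (phiMax_mono' T ψ hab x)
  -- the target set equals the union
  have hUnion : {x | ∃ n, 1 ≤ n ∧ 0 < birkhoffSum T ψ n x} = ⋃ n, M n := by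
    ext x
    simp only [Set.mem_setOf_eq, Set.mem_iUnion, hM]
    constructor
    · rintro ⟨n, hn1, hn⟩
      exact ⟨n, lt_of_lt_of_le hn (birkhoffSum_le_phiMax T ψ le_rfl x)⟩
    · rintro ⟨n, hn⟩
      obtain ⟨k, hk1, hkn, hk⟩ := exists_of_phiMax_pos T ψ hn
      exact ⟨k, hk1, lt_of_lt_of_le hn hk⟩
  -- each stage has nonnegative integral
  have hstage : ∀ n, 0 ≤ ∫ x in M n, ψ x ∂μ := by
    intro n
    cases n with
    | zero =>
      have : M 0 = ∅ := by
        ext x; simp [hM, phiMax]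
      simp [this]
    | succ n =>
      have hΦi : ∀ m, Integrable (phiMax T ψ m) μ := integrable_phiMax hT hm hi
      have hΦiT : Integrable (fun x => phiMax T ψ n (T x)) μ := mp_integrable_comp hT (hΦi n)
      -- on M (n+1), ψ x = phiMax (n+1) x - phiMax n (T x)
      have heq : ∫ x in M (n+1), ψ x ∂μ
          = ∫ x in M (n+1), (phiMax T ψ (n+1) x - phiMax T ψ n (T x)) ∂μ := by
        refine setIntegral_congr_fun (hMmeas (n+1)) ?_
        intro x hx
        have hx' : 0 < phiMax T ψ (n+1) x := hx
        have : phiMax T ψ (n+1) x = ψ x + phiMax T ψ n (T x) := by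
          rw [phiMax_succ] at hx' ⊢
          rcases max_cases (0:ℝ) (ψ x + phiMax T ψ n (T x)) with ⟨h1, h2⟩ | ⟨h1, h2⟩
          · exact absurd (h1 ▸ hx') (lt_irrefl 0)
          · exact h1
        show ψ x = phiMax T ψ (n+1) x - phiMax T ψ n (T x)
        rw [this]; ring
      rw [heq, integral_sub ((hΦi (n+1)).integrableOn) (hΦiT.integrableOn)]
      have h1 : ∫ x in M (n+1), phiMax T ψ (n+1) x ∂μ = ∫ x, phiMax T ψ (n+1) x ∂μ := by
        rw [← integral_add_compl (hMmeas (n+1)) (hΦi (n+1))]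
        have : ∫ x in (M (n+1))ᶜ, phiMax T ψ (n+1) x ∂μ = 0 := by
          refine setIntegral_eq_zero_of_forall_eq_zero ?_
          intro x hx
          have h0 : ¬ (0 < phiMax T ψ (n+1) x) := hx
          exact le_antisymm (not_lt.1 h0) (phiMax_nonneg T ψ (n+1) x)
        rw [this, add_zero]
      have h2 : ∫ x in M (n+1), phiMax T ψ n (T x) ∂μ ≤ ∫ x, phiMax T ψ n (T x) ∂μ :=
        setIntegral_le_integral hΦiT
          (Eventually.of_forall fun x => phiMax_nonneg T ψ n (T x))
      have h3 : ∫ x, phiMax T ψ n (T x) ∂μ = ∫ x, phiMax T ψ n x ∂μ :=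
        mp_integral_comp hT (hΦi n).aestronglyMeasurable
      have h4 : ∫ x, phiMax T ψ n x ∂μ ≤ ∫ x, phiMax T ψ (n+1) x ∂μ :=
        integral_mono (hΦi n) (hΦi (n+1)) (fun x => phiMax_mono T ψ n x)
      rw [h1]
      linarith
  rw [hUnion]
  have := tendsto_setIntegral_of_monotone hMmeas hMmono (hi.integrableOn)
  exact ge_of_tendsto' this hstage

end Maximal

section OneSided

variable {X : Type*} [MeasurableSpace X] {μ : Measure X} {T : X → X}
set_option linter.unusedSectionVars false

lemma onesided [IsProbabilityMeasure μ] (hT : Ergodic T μ) {ψ : X → ℝ}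
    (hm : Measurable ψ) (hi : Integrable ψ μ) {t : ℝ} (ht : ∫ x, ψ x ∂μ < t) :
    ∀ᵐ x ∂μ, ∀ᶠ n in atTop, birkhoffSum T ψ n x ≤ n * t := by
  have hTm : MeasurePreserving T μ μ := hT.toMeasurePreserving
  set c : ℝ := ∫ x, ψ x ∂μ with hc
  set s : ℕ → ℝ := fun j => t - (t - c) / (j + 2) with hs
  have hslt : ∀ j, s j < t := by
    intro j
    have : (0:ℝ) < (t - c) / (j + 2) := div_pos (sub_pos.2 ht) (by positivity)
    simp only [hs]; linarith
  have hsc : ∀ j, c < s j := by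
    intro j
    have h2 : (t - c) / (j + 2) < t - c := by
      rw [div_lt_iff₀ (by positivity)]
      nlinarith [sub_pos.2 ht, (Nat.cast_nonneg (α := ℝ) j)]
    simp only [hs]; linarith
  have hsmono : ∀ j, s j < s (j + 1) := by
    intro j
    have h1 : (t - c) / ((j:ℝ) + 1 + 2) < (t - c) / ((j:ℝ) + 2) :=
      div_lt_div_of_pos_left (sub_pos.2 ht) (by positivity) (by linarith)
    simp only [hs]; push_cast; linarith
  set E : Set X := {x | ∀ j : ℕ, ∀ m : ℕ, ∃ n, m ≤ n ∧ (n:ℝ) * s j < birkhoffSum T ψ n x}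
    with hE
  have hEmeas : MeasurableSet E := by
    have : E = ⋂ (j : ℕ), ⋂ (m : ℕ), ⋃ (n : ℕ), ⋃ (_ : m ≤ n),
        {x | (n:ℝ) * s j < birkhoffSum T ψ n x} := by
      ext x; simp only [hE, Set.mem_setOf_eq, Set.mem_iInter, Set.mem_iUnion]
      constructor
      · intro h j m; obtain ⟨n, h1, h2⟩ := h j m; exact ⟨n, h1, h2⟩
      · intro h j m; obtain ⟨n, h1, h2⟩ := h j m; exact ⟨n, h1, h2⟩
    rw [this]
    refine MeasurableSet.iInter fun j => MeasurableSet.iInter fun m =>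
      MeasurableSet.iUnion fun n => MeasurableSet.iUnion fun _ =>
      measurableSet_lt measurable_const (measurable_birkhoffSum hTm.measurable hm n)
  have hEinv : T ⁻¹' E = E := by
    ext x
    simp only [Set.mem_preimage, hE, Set.mem_setOf_eq]
    constructor
    · -- T x ∈ E → x ∈ E
      intro h j m
      have hd : 0 < s (j+1) - s j := sub_pos.2 (hsmono j)
      obtain ⟨m₀, hm₀⟩ := exists_nat_ge ((s j - ψ x) / (s (j+1) - s j))
      obtain ⟨n, hn1, hn2⟩ := h (j+1) (max m m₀)
      have hmn : m ≤ n := le_trans (le_max_left m m₀) hn1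
      refine ⟨n + 1, by omega, ?_⟩
      have h1 : birkhoffSum T ψ (n+1) x = ψ x + birkhoffSum T ψ n (T x) :=
        birkhoffSum_succ' T ψ n x
      have hnm₀ : (m₀ : ℝ) ≤ n := by exact_mod_cast le_trans (le_max_right m m₀) hn1
      have : (s j - ψ x) ≤ n * (s (j+1) - s j) := by
        calc s j - ψ x ≤ m₀ * (s (j+1) - s j) := by
              rw [div_le_iff₀ hd] at hm₀; linarith
          _ ≤ n * (s (j+1) - s j) := by nlinarith
      rw [h1]; push_cast; nlinarith [hsmono j]
    · -- x ∈ E → T x ∈ E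
      intro h j m
      have hd : 0 < s (j+1) - s j := sub_pos.2 (hsmono j)
      obtain ⟨m₀, hm₀⟩ := exists_nat_ge ((ψ x - s j) / (s (j+1) - s j))
      obtain ⟨n, hn1, hn2⟩ := h (j+1) (max (m+1) (m₀+1))
      obtain ⟨k, rfl⟩ : ∃ k, n = k + 1 := ⟨n - 1, by omega⟩
      refine ⟨k, by omega, ?_⟩
      have h1 : birkhoffSum T ψ (k+1) x = ψ x + birkhoffSum T ψ k (T x) :=
        birkhoffSum_succ' T ψ k x
      have hnm₀ : (m₀ : ℝ) ≤ k := by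
        have : m₀ + 1 ≤ k + 1 := le_trans (le_max_right _ _) hn1
        exact_mod_cast Nat.succ_le_succ_iff.1 this
      have : (ψ x - s j) ≤ k * (s (j+1) - s j) := by
        calc ψ x - s j ≤ m₀ * (s (j+1) - s j) := by
              rw [div_le_iff₀ hd] at hm₀; linarith
          _ ≤ k * (s (j+1) - s j) := by nlinarith
      rw [h1] at hn2; push_cast at hn2 ⊢; nlinarith [hsmono j]
  rcases hT.toPreErgodic.ae_empty_or_univ hEmeas hEinv with hE0 | hE1
  · -- E is null: a.e. the eventual bound holds
    have hae : ∀ᵐ x ∂μ, x ∉ E := measure_eq_zero_iff_ae_notMem.1 (ae_eq_empty.mp hE0)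
    filter_upwards [hae] with x hx
    simp only [hE, Set.mem_setOf_eq, not_forall, not_exists, not_and, not_lt] at hx
    obtain ⟨j, m, hjm⟩ := hx
    rw [eventually_atTop]
    refine ⟨m, fun n hn => ?_⟩
    have h1 := hjm n hn
    have h2 : (n:ℝ) * s j ≤ n * t := mul_le_mul_of_nonneg_left (hslt j).le (Nat.cast_nonneg n)
    linarith
  · -- E is conull: contradiction with the maximal ergodic theorem
    exfalso
    set ψ' : X → ℝ := fun x => ψ x - s 0 with hψ'
    have hm' : Measurable ψ' := hm.sub measurable_const
    have hi' : Integrable ψ' μ := hi.sub (integrable_const _)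
    have hS' : ∀ n x, birkhoffSum T ψ' n x = birkhoffSum T ψ n x - n * s 0 := by
      intro n x
      simp only [birkhoffSum, hψ', Finset.sum_sub_distrib, Finset.sum_const,
        Finset.card_range, nsmul_eq_mul]
    have hsub : E ⊆ {x | ∃ n, 1 ≤ n ∧ 0 < birkhoffSum T ψ' n x} := by
      intro x hx
      obtain ⟨n, hn1, hn2⟩ := hx 0 1
      exact ⟨n, hn1, by rw [hS']; linarith⟩
    have hAconull : {x | ∃ n, 1 ≤ n ∧ 0 < birkhoffSum T ψ' n x} =ᵐ[μ] Set.univ := by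
      refine Filter.eventuallyEq_univ.2 ?_
      filter_upwards [Filter.eventuallyEq_univ.1 hE1] with x hx
      exact hsub hx
    have hmax := maximal_ergodic hTm hm' hi'
    rw [setIntegral_congr_set hAconull] at hmax
    rw [setIntegral_univ] at hmax
    have : ∫ x, ψ' x ∂μ = c - s 0 := by
      rw [hψ']
      rw [integral_sub hi (integrable_const _)]
      simp [hc]
    rw [this] at hmax
    linarith [hsc 0]

end OneSided

section Key

variable {X : Type*} [MeasurableSpace X] {μ : Measure X} {T : X → X}
set_option linter.unusedSectionVars false
set_option maxHeartbeats 1000000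

lemma floor_eq_dist_lt {a b ε : ℝ} (hε : 0 < ε) (h : ⌊a/ε⌋ = ⌊b/ε⌋) : |a - b| < ε := by
  have f1 := Int.floor_le (a/ε)
  have f2 := Int.lt_floor_add_one (a/ε)
  have f3 := Int.floor_le (b/ε)
  have f4 := Int.lt_floor_add_one (b/ε)
  rw [h] at f1 f2
  have h1 : a/ε - b/ε < 1 := by linarith
  have h2 : b/ε - a/ε < 1 := by linarith
  have e1 : a/ε * ε = a := div_mul_cancel₀ a hε.ne'
  have e2 : b/ε * ε = b := div_mul_cancel₀ b hε.ne'
  rw [abs_sub_lt_iff]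
  constructor <;> nlinarith

lemma key [IsProbabilityMeasure μ] (hT : Ergodic T μ) {ψ : X → ℝ}
    (hm : Measurable ψ) (hi : Integrable ψ μ) (hzero : ∫ x, ψ x ∂μ = 0)
    {ε : ℝ} (hε : 0 < ε) {N : ℕ} (hN : 1 ≤ N) :
    μ {x | ∀ n, N ≤ n → ε ≤ |birkhoffSum T ψ n x|} = 0 := by
  classical
  have hTm : MeasurePreserving T μ μ := hT.toMeasurePreserving
  set B : Set X := {x | ∀ n, N ≤ n → ε ≤ |birkhoffSum T ψ n x|} with hB
  have hBmeas : MeasurableSet B := by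
    have : B = ⋂ (n : ℕ), ⋂ (_ : N ≤ n), {x | ε ≤ |birkhoffSum T ψ n x|} := by
      ext x; simp [hB]
    rw [this]
    exact MeasurableSet.iInter fun n => MeasurableSet.iInter fun _ =>
      measurableSet_le measurable_const (measurable_birkhoffSum hTm.measurable hm n).abs
  by_contra hμB
  set δ : ℝ := (μ B).toReal with hδdef
  have hδ : 0 < δ := ENNReal.toReal_pos hμB (measure_ne_top μ B)
  set η : ℝ := ε * δ / (16 * N) with hηdef
  have hη : 0 < η := by
    apply div_pos (mul_pos hε hδ)
    have : (0:ℝ) < N := by exact_mod_cast hN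
    linarith
  -- indicator function of B
  set ξ : X → ℝ := Set.indicator B 1 with hξdef
  have hξm : Measurable ξ := measurable_const.indicator hBmeas
  have hξi : Integrable ξ μ := (integrable_const (1:ℝ)).indicator hBmeas
  have hξsum : ∀ n x, birkhoffSum T ξ n x
      = (((Finset.range n).filter (fun k => T^[k] x ∈ B)).card : ℝ) := by
    intro n x
    simp [birkhoffSum, hξdef, Set.indicator_apply, Finset.sum_boole]
  -- visits estimate
  have hvisits : ∀ᵐ x ∂μ, ∀ᶠ n : ℕ in atTop,
      (n:ℝ) * (δ/2) ≤ (((Finset.range n).filter (fun k => T^[k] x ∈ B)).card : ℝ) := by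
    have hint : ∫ x, -ξ x ∂μ = -δ := by
      rw [integral_neg, hξdef, integral_indicator_one hBmeas, hδdef]; rfl
    have h := onesided hT hξm.neg hξi.neg (t := -(δ/2)) (by show ∫ x, -ξ x ∂μ < _; rw [hint]; linarith)
    filter_upwards [h] with x hx
    filter_upwards [hx] with n hn
    have hSneg : birkhoffSum T (fun y => -ξ y) n x = -birkhoffSum T ξ n x := by
      simp [birkhoffSum, Finset.sum_neg_distrib]
    change birkhoffSum T (fun y => -ξ y) n x ≤ _ at hn
    rw [hSneg, hξsum] at hn
    have : -((((Finset.range n).filter (fun k => T^[k] x ∈ B)).card : ℝ)) ≤ n * (-(δ/2)) := hn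
    linarith
  -- smallness of Birkhoff sums
  have hsmall : ∀ᵐ x ∂μ, ∀ᶠ n : ℕ in atTop, |birkhoffSum T ψ n x| ≤ n * η := by
    have h1 := onesided hT hm hi (t := η) (by rw [hzero]; exact hη)
    have h2 := onesided hT hm.neg hi.neg (t := η)
      (by show ∫ x, -ψ x ∂μ < η; rw [integral_neg, hzero]; simpa using hη)
    filter_upwards [h1, h2] with x hx1 hx2
    filter_upwards [hx1, hx2] with n hn1 hn2
    have hSneg : birkhoffSum T (fun y => -ψ y) n x = -birkhoffSum T ψ n x := by
      simp [birkhoffSum, Finset.sum_neg_distrib]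
    change birkhoffSum T (fun y => -ψ y) n x ≤ _ at hn2
    rw [hSneg] at hn2
    rw [abs_le]
    constructor <;> linarith
  -- pick a point satisfying both
  have hne : (ae μ).NeBot := ae_neBot.2 (IsProbabilityMeasure.ne_zero μ)
  obtain ⟨x, hx1, hx2⟩ := (hvisits.and hsmall).exists
  rw [eventually_atTop] at hx1 hx2
  obtain ⟨a₁, ha₁⟩ := hx1
  obtain ⟨a₂, ha₂⟩ := hx2
  -- uniform bound |S_k x| ≤ C + k η
  set C : ℝ := ∑ k ∈ Finset.range a₂, |birkhoffSum T ψ k x| with hCdef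
  have hC0 : 0 ≤ C := Finset.sum_nonneg fun k _ => abs_nonneg _
  have hCb : ∀ k : ℕ, |birkhoffSum T ψ k x| ≤ C + k * η := by
    intro k
    rcases lt_or_ge k a₂ with hk | hk
    · have : |birkhoffSum T ψ k x| ≤ C :=
        Finset.single_le_sum (f := fun k => |birkhoffSum T ψ k x|)
          (fun i _ => abs_nonneg _) (Finset.mem_range.2 hk)
      have : (0:ℝ) ≤ k * η := by positivity
      linarith [Finset.single_le_sum (f := fun k => |birkhoffSum T ψ k x|)
          (fun (i : ℕ) (_ : i ∈ Finset.range a₂) => abs_nonneg _) (Finset.mem_range.2 hk)]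
    · have := ha₂ k hk
      linarith
  -- choose n large
  set R : ℝ := N * (2 * C / ε + 2) with hRdef
  obtain ⟨n₂, hn₂⟩ := exists_nat_gt (R / (δ/8))
  set n : ℕ := a₁ + n₂ + 1 with hndef
  have hna₁ : a₁ ≤ n := by omega
  have hnR : R < n * (δ/8) := by
    have h1 : (n₂:ℝ) ≤ n := by exact_mod_cast Nat.le_of_lt_succ (by omega)
    have h2 : R / (δ/8) < n := lt_of_lt_of_le hn₂ h1
    rw [div_lt_iff₀ (by linarith)] at h2
    linarith
  -- the visit set
  set K : Finset ℕ := (Finset.range n).filter (fun k => T^[k] x ∈ B) with hKdef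
  have hKcard : (n:ℝ) * (δ/2) ≤ K.card := ha₁ n hna₁
  -- pigeonhole on residues mod N
  have hfiber : K.card = ∑ ρ ∈ Finset.range N, (K.filter (fun k => k % N = ρ)).card :=
    Finset.card_eq_sum_card_fiberwise fun k _ => Finset.mem_range.2 (Nat.mod_lt k (by omega))
  have hex : ∃ ρ ∈ Finset.range N, K.card ≤ N * (K.filter (fun k => k % N = ρ)).card := by
    apply Finset.exists_le_of_sum_le ⟨0, Finset.mem_range.2 (by omega)⟩
    rw [← Finset.mul_sum, ← hfiber]
    rw [Finset.sum_const, Finset.card_range, smul_eq_mul]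
  obtain ⟨ρ, _, hρ⟩ := hex
  set Kρ : Finset ℕ := K.filter (fun k => k % N = ρ) with hKρdef
  -- the floor map is injective on Kρ
  set J : ℕ → ℤ := fun k => ⌊birkhoffSum T ψ k x / ε⌋ with hJdef
  have hsep : ∀ k ∈ Kρ, ∀ k' ∈ Kρ, k < k' →
      ε ≤ |birkhoffSum T ψ k' x - birkhoffSum T ψ k x| := by
    intro k hk k' hk' hlt
    have hkB : T^[k] x ∈ B := (Finset.mem_filter.1 (Finset.mem_filter.1 hk).1).2
    have hmod : k % N = k' % N := by
      rw [(Finset.mem_filter.1 hk).2, (Finset.mem_filter.1 hk').2]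
    have hdvd : N ∣ k' - k := (Nat.modEq_iff_dvd' hlt.le).1 hmod
    have hge : N ≤ k' - k := Nat.le_of_dvd (by omega) hdvd
    have hsum : birkhoffSum T ψ k' x
        = birkhoffSum T ψ k x + birkhoffSum T ψ (k' - k) (T^[k] x) := by
      have h := birkhoffSum_add T ψ k (k' - k) x
      rw [show k + (k' - k) = k' from by omega] at h
      exact h
    have := hkB (k' - k) hge
    rw [hsum]
    simpa using this
  have hinj : Set.InjOn J (Kρ : Set ℕ) := by
    intro k hk k' hk' hJeq
    by_contra hne'
    have hJeq' : ⌊birkhoffSum T ψ k x / ε⌋ = ⌊birkhoffSum T ψ k' x / ε⌋ := hJeq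
    have habs := floor_eq_dist_lt hε hJeq'
    rcases Nat.lt_or_ge k k' with hlt | hge
    · have hs := hsep k hk k' hk' hlt
      rw [abs_sub_comm] at habs
      linarith
    · have hlt : k' < k := by omega
      have hs := hsep k' hk' k hk hlt
      linarith
  -- J maps Kρ into a bounded integer interval
  set Mb : ℝ := C + n * η with hMbdef
  have hMb0 : 0 < Mb := by
    have : (0:ℝ) < n * η := by
      have : (0:ℝ) < n := by exact_mod_cast (by omega : 0 < n)
      positivity
    linarith
  have hmaps : ∀ k ∈ Kρ, J k ∈ Finset.Icc ⌊-Mb/ε⌋ ⌊Mb/ε⌋ := by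
    intro k hk
    have hkn : k < n := Finset.mem_range.1 (Finset.mem_filter.1 (Finset.mem_filter.1 hk).1).1
    have hb : |birkhoffSum T ψ k x| ≤ Mb := by
      have h1 := hCb k
      have h2 : (k:ℝ) * η ≤ n * η := by
        have : (k:ℝ) ≤ n := by exact_mod_cast hkn.le
        nlinarith
      rw [hMbdef]; linarith
    rw [abs_le] at hb
    rw [Finset.mem_Icc]
    constructor
    · exact Int.floor_le_floor (by gcongr; exact hb.1)
    · exact Int.floor_le_floor (by gcongr; exact hb.2)
  have hcard2 : Kρ.card ≤ (Finset.Icc ⌊-Mb/ε⌋ ⌊Mb/ε⌋).card :=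
    Finset.card_le_card_of_injOn J hmaps hinj
  -- bound the cardinality of the interval
  have hIcc : ((Finset.Icc ⌊-Mb/ε⌋ ⌊Mb/ε⌋).card : ℝ) ≤ 2 * (Mb/ε) + 2 := by
    rw [Int.card_Icc]
    have hb1 : (⌊Mb/ε⌋ : ℝ) ≤ Mb/ε := Int.floor_le _
    have hb2 : -(Mb/ε) - 1 < (⌊-Mb/ε⌋ : ℝ) := by
      have := Int.sub_one_lt_floor (-Mb/ε)
      rw [neg_div] at this ⊢
      linarith
    have hnn : 0 ≤ ⌊Mb/ε⌋ + 1 - ⌊-Mb/ε⌋ := by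
      have h1 : (0:ℤ) ≤ ⌊Mb/ε⌋ := by
        apply Int.floor_nonneg.2
        positivity
      have h2 : ⌊-Mb/ε⌋ ≤ 0 := by
        apply Int.floor_nonpos
        rw [neg_div]
        simp only [Left.neg_nonpos_iff]
        positivity
      omega
    have hcast : (((⌊Mb/ε⌋ + 1 - ⌊-Mb/ε⌋).toNat : ℕ) : ℝ)
        = ((⌊Mb/ε⌋ : ℝ) + 1 - (⌊-Mb/ε⌋ : ℝ)) := by
      rw [← Int.cast_natCast, Int.toNat_of_nonneg hnn]
      push_cast
      ring
    rw [hcast]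
    linarith
  -- final contradiction
  have hchain : (n:ℝ) * (δ/2) ≤ N * (2 * (Mb/ε) + 2) := by
    calc (n:ℝ) * (δ/2) ≤ K.card := hKcard
      _ ≤ (N:ℝ) * Kρ.card := by exact_mod_cast hρ
      _ ≤ N * (2 * (Mb/ε) + 2) := by
          apply mul_le_mul_of_nonneg_left _ (Nat.cast_nonneg N)
          exact_mod_cast le_trans (by exact_mod_cast hcard2) hIcc
  have hNpos : (0:ℝ) < N := by exact_mod_cast hN
  have hηval : 2 * ((n:ℝ) * η) / ε * N = (n:ℝ) * (δ/8) := by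
    rw [hηdef]
    field_simp
    ring
  have hexpand : (N:ℝ) * (2 * (Mb/ε) + 2) = R + n * (δ/8) := by
    rw [hMbdef, hRdef, ← hηval]
    field_simp
    ring
  rw [hexpand] at hchain
  have hnpos : (0:ℝ) < n := by exact_mod_cast (by omega : 0 < n)
  nlinarith

end Key

theorem stmt4 {X : Type*} [MeasurableSpace X] (μ : Measure X) [IsProbabilityMeasure μ]
    (T : X → X) (hT : Ergodic T μ) (φ : X → ℝ) (hφ : Integrable φ μ)
    (hzero : ∫ x, φ x ∂μ = 0) :
    ∀ᵐ x ∂μ, ∀ ε > 0, ∀ N : ℕ, ∃ n ≥ N, 1 ≤ n ∧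
      |∑ k ∈ Finset.range n, φ (T^[k] x)| < ε := by
  have hTm : MeasurePreserving T μ μ := hT.toMeasurePreserving
  set ψ : X → ℝ := hφ.1.mk φ with hψdef
  have hψm : Measurable ψ := hφ.1.stronglyMeasurable_mk.measurable
  have hψeq : φ =ᵐ[μ] ψ := hφ.1.ae_eq_mk
  have hψi : Integrable ψ μ := hφ.congr hψeq
  have hψzero : ∫ x, ψ x ∂μ = 0 := by
    rw [← integral_congr_ae hψeq]; exact hzero
  have hcomp : ∀ᵐ x ∂μ, ∀ k : ℕ, φ (T^[k] x) = ψ (T^[k] x) := by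
    rw [ae_all_iff]
    intro k
    have := (hTm.iterate k).quasiMeasurePreserving.ae_eq_comp hψeq
    filter_upwards [this] with x hx
    exact hx
  have haveA : ∀ (ε : ℝ), 0 < ε → ∀ᵐ x ∂μ, ∀ N : ℕ,
      ∃ n, max N 1 ≤ n ∧ |birkhoffSum T ψ n x| < ε := by
    intro ε hε
    rw [ae_all_iff]
    intro N
    have h := key hT hψm hψi hψzero hε (N := max N 1) (le_max_right _ _)
    have h2 := measure_eq_zero_iff_ae_notMem.1 h
    filter_upwards [h2] with x hx
    simp only [Set.mem_setOf_eq, not_forall, not_le, exists_prop] at hx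
    obtain ⟨n, hn1, hn2⟩ := hx
    exact ⟨n, hn1, hn2⟩
  have hall : ∀ᵐ x ∂μ, ∀ m : ℕ, ∀ N : ℕ,
      ∃ n, max N 1 ≤ n ∧ |birkhoffSum T ψ n x| < 1/(m+1) :=
    ae_all_iff.2 fun m => haveA _ (by positivity)
  filter_upwards [hall, hcomp] with x hx hcx
  intro ε hε N
  obtain ⟨m, hm⟩ := exists_nat_gt (1/ε)
  obtain ⟨n, hn1, hn2⟩ := hx m N
  refine ⟨n, le_trans (le_max_left _ _) hn1, le_trans (le_max_right _ _) hn1, ?_⟩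
  have hSeq : ∑ k ∈ Finset.range n, φ (T^[k] x) = birkhoffSum T ψ n x :=
    Finset.sum_congr rfl fun k _ => hcx k
  rw [hSeq]
  have hlt : (1:ℝ)/(m+1) < ε := by
    rw [div_lt_iff₀ (by positivity)]
    rw [div_lt_iff₀ hε] at hm
    nlinarith
  linarith
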